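/- Let H be an induced-hereditary graph property closed under union with K₁, G a graph, and e = xy an edge with γ_H(G − e) < γ_H(G). Then every minimum dominating H-set M of G − e contains both x and y, and γ_H(G_e) ≤ γ_H(G − e) < γ_H(G). -/

import Mathlib

open SimpleGraph

/-- A graph property: a class of finite simple graphs on arbitrary vertex types. -/
abbrev GraphProp := ∀ (V : Type), SimpleGraph V → Prop

/-- Closure under graph isomorphism. -/
def IsoClosed (P : GraphProp) : Prop :=
  ∀ (V W : Type) (G : SimpleGraph V) (H : SimpleGraph W), Nonempty (G ≃g H) → P V G → P W H

/-- A property is nondegenerate if it contains all edgeless graphs. -/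
def Nondegenerate (P : GraphProp) : Prop :=
  IsoClosed P ∧ ∀ (V : Type), P V ⊥

/-- Closed under induced subgraphs. -/
def InducedHereditary (P : GraphProp) : Prop :=
  IsoClosed P ∧ ∀ (V : Type) (G : SimpleGraph V) (s : Set V), P V G → P s (G.induce s)

/-- Closed under all subgraphs. -/
def Hereditary (P : GraphProp) : Prop :=
  InducedHereditary P ∧ ∀ (V : Type) (G G' : SimpleGraph V), G' ≤ G → P V G → P V G'

/-- The graph `G` together with one new isolated vertex. -/
def addK1 {V : Type} (G : SimpleGraph V) : SimpleGraph (V ⊕ Unit) where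
  Adj a b := ∃ x y, a = Sum.inl x ∧ b = Sum.inl y ∧ G.Adj x y
  symm := by constructor; rintro a b ⟨x, y, rfl, rfl, h⟩; exact ⟨y, x, rfl, rfl, h.symm⟩
  loopless := by constructor; rintro a ⟨x, y, rfl, hy, h⟩; simp only [Sum.inl.injEq] at hy; subst hy; exact G.loopless.irrefl _ h

/-- Closure under disjoint union with `K₁`. -/
def ClosedUnderK1 (P : GraphProp) : Prop :=
  ∀ (V : Type) (G : SimpleGraph V), P V G → P (V ⊕ Unit) (addK1 G)

/-- `S` is a dominating set of `G`. -/
def IsDominating {V : Type} (G : SimpleGraph V) (S : Set V) : Prop :=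
  ∀ v ∉ S, ∃ u ∈ S, G.Adj u v

/-- `S` is a dominating set inducing a subgraph with property `P`. -/
def IsDomPSet (P : GraphProp) {V : Type} (G : SimpleGraph V) (S : Set V) : Prop :=
  IsDominating G S ∧ P S (G.induce S)

/-- The domination number with respect to the property `P`. -/
noncomputable def gammaP (P : GraphProp) {V : Type} [Fintype V] (G : SimpleGraph V) : ℕ :=
  sInf (Set.ncard '' {S : Set V | IsDomPSet P G S})

/-- A minimum dominating `P`-set. -/
def IsGammaSet (P : GraphProp) {V : Type} [Fintype V] (G : SimpleGraph V) (S : Set V) : Prop :=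
  IsDomPSet P G S ∧ S.ncard = gammaP P G

/-- The ordinary domination number. -/
noncomputable def gamma {V : Type} [Fintype V] (G : SimpleGraph V) : ℕ :=
  sInf (Set.ncard '' {S : Set V | IsDominating G S})

/-- The graph obtained from `G` by deleting the edge `uv` and replacing it by the
path `u - x₀ - x₁ - ⋯ - x_{t-1} - v` through `t` new vertices. -/
def subdiv {V : Type} (G : SimpleGraph V) (u v : V) (t : ℕ) : SimpleGraph (V ⊕ Fin t) where
  Adj a b := match a, b with
    | Sum.inl a, Sum.inl b => G.Adj a b ∧ ¬((a = u ∧ b = v) ∨ (a = v ∧ b = u))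
    | Sum.inl a, Sum.inr i => (a = u ∧ (i : ℕ) = 0) ∨ (a = v ∧ (i : ℕ) + 1 = t)
    | Sum.inr i, Sum.inl a => (a = u ∧ (i : ℕ) = 0) ∨ (a = v ∧ (i : ℕ) + 1 = t)
    | Sum.inr i, Sum.inr j => (i : ℕ) + 1 = (j : ℕ) ∨ (j : ℕ) + 1 = (i : ℕ)
  symm := by
    constructor
    rintro (a | i) (b | j) h
    · exact ⟨h.1.symm, fun hc => h.2 (by tauto)⟩
    · exact h
    · exact h
    · tauto
  loopless := by
    constructor
    rintro (a | i) h
    · exact G.loopless.irrefl a h.1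
    · omega

/-- The private neighbour set `pn_G[x, X] = {y : N[y,G] ∩ X = {x}}`. -/
def pn {V : Type} (G : SimpleGraph V) (X : Set V) (x : V) : Set V :=
  {y | insert y (G.neighborSet y) ∩ X = {x}}

/-- The graph `G` with the vertex `v` deleted. -/
abbrev delVert {V : Type} (G : SimpleGraph V) (v : V) : SimpleGraph {w : V // w ≠ v} :=
  G.induce {w : V | w ≠ v}

/-- An independent set. -/
def IsIndep {V : Type} (G : SimpleGraph V) (S : Set V) : Prop :=
  S.Pairwise fun a b => ¬ G.Adj a b

private lemma graphIso_bot {V W : Type} (e : V ≃ W) :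
    Nonempty ((⊥ : SimpleGraph V) ≃g (⊥ : SimpleGraph W)) :=
  ⟨{ toEquiv := e, map_rel_iff' := by simp }⟩

/-- If `P` is induced-hereditary, closed under `K₁`, and nonempty, it contains all finite
edgeless graphs. -/
private lemma P_bot (P : GraphProp) (h1 : InducedHereditary P) (h2 : ClosedUnderK1 P)
    (W : Type) (Gw : SimpleGraph W) (hw : P W Gw) (V : Type) [Fintype V] :
    P V ⊥ := by
  classical
  suffices h : ∀ (n : ℕ) (V : Type) [Fintype V], Fintype.card V = n → P V ⊥ from h _ V rfl
  intro n
  induction n with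
  | zero =>
    intro V _ hV
    have hE : IsEmpty V := Fintype.card_eq_zero_iff.mp hV
    have h0 : P ↥(∅ : Set W) (Gw.induce ∅) := h1.2 W Gw ∅ hw
    refine h1.1 _ _ _ _ ?_ h0
    exact ⟨{ toEquiv := Equiv.equivOfIsEmpty _ _,
             map_rel_iff' := by intro a; exact absurd a.2 (Set.notMem_empty _) }⟩
  | succ n ih =>
    intro V _ hV
    obtain ⟨v⟩ : Nonempty V := Fintype.card_pos_iff.mp (by omega)
    have hcard : Fintype.card {w : V // w ≠ v} = n := by
      have h' := Fintype.card_subtype_compl (fun w : V => w = v)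
      rw [Fintype.card_subtype_eq] at h'
      have : Fintype.card {w : V // w ≠ v} = Fintype.card {w : V // ¬ w = v} := by
        apply Fintype.card_congr; rfl
      omega
    have hP' : P {w : V // w ≠ v} ⊥ := ih _ hcard
    have hP2 := h2 _ _ hP'
    have haddbot : addK1 (⊥ : SimpleGraph {w : V // w ≠ v}) = ⊥ := by
      ext a b; simp [addK1]
    rw [haddbot] at hP2
    refine h1.1 _ _ _ _ ?_ hP2
    exact graphIso_bot (Fintype.equivOfCardEq (by simp [hcard, hV]))

/-- Any graph has a dominating `P`-set, provided `P` contains all edgeless graphs: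
take a maximal independent set. -/
private lemma exists_domPSet (P : GraphProp) {V : Type} [Fintype V] (G : SimpleGraph V)
    (hbot : ∀ (U : Type) [Fintype U], P U ⊥) :
    ∃ S : Set V, IsDomPSet P G S := by
  classical
  have hfin : {S : Set V | IsIndep G S}.Finite := Set.toFinite _
  have hne : {S : Set V | IsIndep G S}.Nonempty := ⟨∅, by simp [IsIndep]⟩
  obtain ⟨S, hS, hmax⟩ := hfin.exists_maximalFor id _ hne
  have hSind : IsIndep G S := hS
  have hsymm : Symmetric fun a b : V => ¬ G.Adj a b := fun a b h hadj => h hadj.symm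
  refine ⟨S, ?_, ?_⟩
  · intro v hv
    by_contra hno
    push_neg at hno
    have hins : IsIndep G (insert v S) := by
      haveI : Std.Symm (fun a b : V => ¬ G.Adj a b) := ⟨fun a b h => hsymm h⟩
      rw [IsIndep, Set.pairwise_insert_of_symmetric]
      exact ⟨hSind, fun b hb _ hadj => hno b hb hadj.symm⟩
    have heq := hmax (j := insert v S) hins (Set.subset_insert v S)
    simp only [id] at heq
    exact hv (heq (Set.mem_insert v S))
  · have hind : G.induce S = ⊥ := by
      ext a b
      simp only [comap_adj, Function.Embedding.coe_subtype, bot_adj, iff_false]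
      intro h
      exact hSind a.2 b.2 (G.ne_of_adj h) h
    rw [hind]
    exact hbot _

/-- if `γ_H(G − e) < γ_H(G)` then every `γ_H`-set of `G − e` contains both
endpoints of `e`, and `γ_H(G_e) ≤ γ_H(G − e) < γ_H(G)`. -/
theorem erminus_endpoints_and_subdiv (P : GraphProp) (h1 : InducedHereditary P)
    (h2 : ClosedUnderK1 P) {V : Type} [Fintype V] (G : SimpleGraph V) (x y : V)
    (he : G.Adj x y) (hlt : gammaP P (G.deleteEdges {s(x, y)}) < gammaP P G) :
    (∀ M : Set V, IsGammaSet P (G.deleteEdges {s(x, y)}) M → x ∈ M ∧ y ∈ M) ∧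
    gammaP P (subdiv G x y 1) ≤ gammaP P (G.deleteEdges {s(x, y)}) ∧
    gammaP P (G.deleteEdges {s(x, y)}) < gammaP P G := by
  classical
  set G' := G.deleteEdges {s(x, y)} with hG'def
  -- the family of dominating P-sets of G is nonempty (otherwise gammaP G = 0)
  have hGne : {S : Set V | IsDomPSet P G S}.Nonempty := by
    by_contra h
    rw [Set.not_nonempty_iff_eq_empty] at h
    have h0 : gammaP P G = 0 := by rw [gammaP, h]; simp
    omega
  obtain ⟨D, hD⟩ := hGne
  have hbot : ∀ (U : Type) [Fintype U], P U ⊥ := fun U _ => P_bot P h1 h2 _ _ hD.2 U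
  -- part 1
  have part1 : ∀ M : Set V, IsGammaSet P G' M → x ∈ M ∧ y ∈ M := by
    rintro M ⟨⟨hMdom, hMP⟩, hMcard⟩
    have main : (x ∉ M ∨ y ∉ M) → False := by
      intro hxy
      have hdom : IsDominating G M := by
        intro v hv
        obtain ⟨u, hu, hadj⟩ := hMdom v hv
        rw [hG'def, deleteEdges_adj] at hadj
        exact ⟨u, hu, hadj.1⟩
      have hind : G.induce M = G'.induce M := by
        ext a b
        simp only [comap_adj, Function.Embedding.coe_subtype, hG'def, deleteEdges_adj,
          Set.mem_singleton_iff]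
        constructor
        · intro h
          refine ⟨h, fun heq => ?_⟩
          rw [Sym2.eq_iff] at heq
          rcases heq with ⟨h1, h2⟩ | ⟨h1, h2⟩ <;> rcases hxy with hx | hy
          · exact hx (h1 ▸ a.2)
          · exact hy (h2 ▸ b.2)
          · exact hx (h2 ▸ b.2)
          · exact hy (h1 ▸ a.2)
        · exact fun h => h.1
      have hle : gammaP P G ≤ M.ncard :=
        Nat.sInf_le ⟨M, ⟨hdom, by rw [hind]; exact hMP⟩, rfl⟩
      omega
    constructor
    · by_contra h; exact main (Or.inl h)
    · by_contra h; exact main (Or.inr h)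
  -- a minimum dominating P-set of G' exists
  obtain ⟨S0, hS0⟩ := exists_domPSet P G' hbot
  have hne' : (Set.ncard '' {S : Set V | IsDomPSet P G' S}).Nonempty := ⟨_, S0, hS0, rfl⟩
  obtain ⟨M, hM, hMcard⟩ := Nat.sInf_mem hne'
  obtain ⟨hxM, hyM⟩ := part1 M ⟨hM, hMcard⟩
  -- part 2: push M into the subdivision
  have hdom2 : IsDominating (subdiv G x y 1) (Sum.inl '' M) := by
    rintro (v | i) hv
    · have hvM : v ∉ M := fun h => hv ⟨v, h, rfl⟩
      obtain ⟨u, hu, hadj⟩ := hM.1 v hvM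
      rw [hG'def, deleteEdges_adj, Set.mem_singleton_iff] at hadj
      refine ⟨Sum.inl u, ⟨u, hu, rfl⟩, ?_⟩
      show G.Adj u v ∧ ¬((u = x ∧ v = y) ∨ (u = y ∧ v = x))
      refine ⟨hadj.1, fun h => hadj.2 ?_⟩
      rw [Sym2.eq_iff]; tauto
    · refine ⟨Sum.inl x, ⟨x, hxM, rfl⟩, ?_⟩
      show (x = x ∧ (i : ℕ) = 0) ∨ (x = y ∧ (i : ℕ) + 1 = 1)
      exact Or.inl ⟨rfl, by omega⟩
  have hiso : Nonempty ((G'.induce M) ≃g ((subdiv G x y 1).induce (Sum.inl '' M))) := by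
    refine ⟨{ toEquiv := Equiv.Set.image Sum.inl M Sum.inl_injective,
              map_rel_iff' := ?_ }⟩
    rintro ⟨a, ha⟩ ⟨b, hb⟩
    show (subdiv G x y 1).Adj (Sum.inl a) (Sum.inl b) ↔ (G'.induce M).Adj ⟨a, ha⟩ ⟨b, hb⟩
    have hL : (subdiv G x y 1).Adj (Sum.inl a) (Sum.inl b) ↔
        (G.Adj a b ∧ ¬((a = x ∧ b = y) ∨ (a = y ∧ b = x))) := Iff.rfl
    rw [hL]
    simp only [comap_adj, Function.Embedding.coe_subtype, hG'def, deleteEdges_adj,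
      Set.mem_singleton_iff, Sym2.eq_iff]
  have hSdom : IsDomPSet P (subdiv G x y 1) (Sum.inl '' M) :=
    ⟨hdom2, h1.1 _ _ _ _ hiso hM.2⟩
  have hle2 : gammaP P (subdiv G x y 1) ≤ (Sum.inl '' M).ncard :=
    Nat.sInf_le ⟨_, hSdom, rfl⟩
  rw [Set.ncard_image_of_injective M Sum.inl_injective] at hle2
  have hMcard' : M.ncard = gammaP P G' := hMcard
  exact ⟨part1, by omega, hlt⟩
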